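/- Let P be a Markov transition kernel on a measurable state space K that is lazy (P(x, {x}) ≥ 1/2 for all x) and reversible with respect to a stationary probability distribution Q. Let φ = inf{ ∫_S P(x, K∖S) dQ(x) / min(Q(S), Q(K∖S)) : S measurable, 0 < Q(S) < 1 } be the conductance. Let Q₀ be a starting distribution with M(Q₀, Q) = sup_S Q₀(S)/Q(S) finite, and let Q_t be the distribution after t steps of the chain started from Q₀. Then for every t ≥ 0, d_tv(Q_t, Q) ≤ M(Q₀, Q) · (1 − φ²/2)^t. -/

import Mathlib

open MeasureTheory Real Set ENNReal

lemma aux_sqrt_ineq {x : ℝ} (h0 : 0 ≤ x) (h1 : x ≤ 1) :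
    Real.sqrt (1 - x) + Real.sqrt (1 + x) ≤ 2 - x^2/4 := by
  have ha : Real.sqrt (1-x) ^ 2 = 1 - x := Real.sq_sqrt (by linarith)
  have hb : Real.sqrt (1+x) ^ 2 = 1 + x := Real.sq_sqrt (by linarith)
  have han : 0 ≤ Real.sqrt (1-x) := Real.sqrt_nonneg _
  have hbn : 0 ≤ Real.sqrt (1+x) := Real.sqrt_nonneg _
  nlinarith [sq_nonneg (Real.sqrt (1-x) * Real.sqrt (1+x) - 1),
    sq_nonneg (Real.sqrt (1-x) + Real.sqrt (1+x) - 2),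
    sq_nonneg (Real.sqrt (1-x) - Real.sqrt (1+x)),
    mul_nonneg han hbn]

noncomputable def wfun (q : ℝ) : ℝ := min (Real.sqrt q) (Real.sqrt (1 - q))

lemma wfun_nonneg (q : ℝ) : 0 ≤ wfun q := le_min (Real.sqrt_nonneg _) (Real.sqrt_nonneg _)

lemma wfun_le_one {q : ℝ} (h1 : q ≤ 1) : wfun q ≤ 1 := by
  rcases le_total q (1/2) with h | h
  · exact (min_le_left _ _).trans (Real.sqrt_le_one.mpr (by linarith))
  · exact (min_le_right _ _).trans (Real.sqrt_le_one.mpr (by linarith))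

lemma wfun_concaveOn : ConcaveOn ℝ (Icc (0:ℝ) 1) wfun := by
  have hsq : ConcaveOn ℝ (Ici (0:ℝ)) Real.sqrt := (Real.strictConcaveOn_sqrt).concaveOn
  constructor
  · exact convex_Icc 0 1
  intro x hx y hy a b ha hb hab
  have hxy : a • x + b • y ∈ Icc (0:ℝ) 1 := (convex_Icc 0 1) hx hy ha hb hab
  have h1 : a * Real.sqrt x + b * Real.sqrt y ≤ Real.sqrt (a*x + b*y) := by
    have := hsq.2 (mem_Ici.2 hx.1) (mem_Ici.2 hy.1) ha hb hab
    simpa using this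
  have h2 : a * Real.sqrt (1-x) + b * Real.sqrt (1-y) ≤ Real.sqrt (1 - (a*x + b*y)) := by
    have := hsq.2 (mem_Ici.2 (by linarith [hx.2] : (0:ℝ) ≤ 1 - x))
      (mem_Ici.2 (by linarith [hy.2] : (0:ℝ) ≤ 1 - y)) ha hb hab
    have he : a * (1-x) + b * (1-y) = 1 - (a*x+b*y) := by ring_nf; linarith [hab]
    simpa [he] using this
  have key : a * wfun x + b * wfun y ≤ wfun (a*x + b*y) := by
    unfold wfun
    refine le_min ?_ ?_
    · exact le_trans (add_le_add (mul_le_mul_of_nonneg_left (min_le_left _ _) ha)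
        (mul_le_mul_of_nonneg_left (min_le_left _ _) hb)) h1
    · exact le_trans (add_le_add (mul_le_mul_of_nonneg_left (min_le_right _ _) ha)
        (mul_le_mul_of_nonneg_left (min_le_right _ _) hb)) h2
  simpa [smul_eq_mul] using key


lemma wfun_spread {a b a' b' : ℝ} (ha : 0 ≤ a) (hb : b ≤ 1) (h1 : a ≤ a')
    (h2 : a' ≤ b') (h3 : b' ≤ b) (hsum : a + b = a' + b') :
    wfun a + wfun b ≤ wfun a' + wfun b' := by
  rcases eq_or_lt_of_le (h1.trans (h2.trans h3)) with heq | hlt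
  · have e1 : a' = a := by linarith
    have e2 : b' = b := by linarith
    rw [e1, e2]
  · set lam : ℝ := (b - a') / (b - a) with hlam
    have hba : 0 < b - a := by linarith
    have hl0 : 0 ≤ lam := div_nonneg (by linarith) hba.le
    have hl1 : lam ≤ 1 := (div_le_one hba).2 (by linarith)
    have hmem_a : a ∈ Icc (0:ℝ) 1 := ⟨ha, by linarith⟩
    have hmem_b : b ∈ Icc (0:ℝ) 1 := ⟨by linarith, hb⟩
    have key1 : lam * wfun a + (1 - lam) * wfun b ≤ wfun a' := by
      have := wfun_concaveOn.2 hmem_a hmem_b hl0 (by linarith : (0:ℝ) ≤ 1 - lam) (by ring)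
      have harg : lam * a + (1 - lam) * b = a' := by
        have hlb : lam * (b - a) = b - a' := by rw [hlam]; exact div_mul_cancel₀ _ hba.ne'
        linear_combination -hlb
      simpa [smul_eq_mul, harg] using this
    have key2 : (1 - lam) * wfun a + lam * wfun b ≤ wfun b' := by
      have := wfun_concaveOn.2 hmem_a hmem_b (by linarith : (0:ℝ) ≤ 1 - lam) hl0 (by ring)
      have harg : (1 - lam) * a + lam * b = b' := by
        have : lam * a + (1 - lam) * b = a' := by
          have hlb : lam * (b - a) = b - a' := by rw [hlam]; exact div_mul_cancel₀ _ hba.ne'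
          linear_combination -hlb
        linarith
      simpa [smul_eq_mul, harg] using this
    nlinarith [key1, key2]

lemma wfun_step {p φ : ℝ} (hp0 : 0 ≤ p) (hp1 : p ≤ 1) (hφ0 : 0 ≤ φ) (hφh : φ ≤ 1/2) :
    wfun (p - 2*φ*min p (1-p)) + wfun (p + 2*φ*min p (1-p)) ≤ (2 - φ^2) * wfun p := by
  have hsqrt := aux_sqrt_ineq (x := 2*φ) (by linarith) (by linarith)
  rcases le_total p (1-p) with hp | hp
  · have hmin : min p (1-p) = p := min_eq_left hp
    rw [hmin]
    have hwp : wfun p = Real.sqrt p := min_eq_left (Real.sqrt_le_sqrt (by linarith))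
    have e1 : p - 2*φ*p = p * (1 - 2*φ) := by ring
    have e2 : p + 2*φ*p = p * (1 + 2*φ) := by ring
    have b1 : wfun (p - 2*φ*p) ≤ Real.sqrt p * Real.sqrt (1 - 2*φ) := by
      refine (min_le_left _ _).trans ?_
      rw [e1, Real.sqrt_mul hp0]
    have b2 : wfun (p + 2*φ*p) ≤ Real.sqrt p * Real.sqrt (1 + 2*φ) := by
      refine (min_le_left _ _).trans ?_
      rw [e2, Real.sqrt_mul hp0]
    have hs : Real.sqrt (1 - 2*φ) + Real.sqrt (1 + 2*φ) ≤ 2 - φ^2 := by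
      have : (2*φ)^2/4 = φ^2 := by ring
      linarith [hsqrt, this.ge.trans_eq rfl]
    have hpn : 0 ≤ Real.sqrt p := Real.sqrt_nonneg _
    calc wfun (p - 2*φ*p) + wfun (p + 2*φ*p)
        ≤ Real.sqrt p * (Real.sqrt (1-2*φ) + Real.sqrt (1+2*φ)) := by rw [mul_add]; exact add_le_add b1 b2
      _ ≤ Real.sqrt p * (2 - φ^2) := by exact mul_le_mul_of_nonneg_left hs hpn
      _ = (2 - φ^2) * wfun p := by rw [hwp]; ring
  · have hmin : min p (1-p) = 1-p := min_eq_right hp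
    rw [hmin]
    have hwp : wfun p = Real.sqrt (1-p) := min_eq_right (Real.sqrt_le_sqrt (by linarith))
    have h1p : 0 ≤ 1 - p := by linarith
    have b1 : wfun (p - 2*φ*(1-p)) ≤ Real.sqrt (1-p) * Real.sqrt (1 + 2*φ) := by
      refine (min_le_right _ _).trans ?_
      have e1 : 1 - (p - 2*φ*(1-p)) = (1-p) * (1 + 2*φ) := by ring
      rw [e1, Real.sqrt_mul h1p]
    have b2 : wfun (p + 2*φ*(1-p)) ≤ Real.sqrt (1-p) * Real.sqrt (1 - 2*φ) := by
      refine (min_le_right _ _).trans ?_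
      have e2 : 1 - (p + 2*φ*(1-p)) = (1-p) * (1 - 2*φ) := by ring
      rw [e2, Real.sqrt_mul h1p]
    have hs : Real.sqrt (1 - 2*φ) + Real.sqrt (1 + 2*φ) ≤ 2 - φ^2 := by
      have : (2*φ)^2/4 = φ^2 := by ring
      linarith [hsqrt]
    have hpn : 0 ≤ Real.sqrt (1-p) := Real.sqrt_nonneg _
    calc wfun (p - 2*φ*(1-p)) + wfun (p + 2*φ*(1-p))
        ≤ Real.sqrt (1-p) * (Real.sqrt (1+2*φ) + Real.sqrt (1-2*φ)) := by rw [mul_add]; exact add_le_add b1 b2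
      _ ≤ Real.sqrt (1-p) * (2 - φ^2) := by refine mul_le_mul_of_nonneg_left (by linarith) hpn
      _ = (2 - φ^2) * wfun p := by rw [hwp]; ring

lemma jensen_sqrt {β : Type*} [MeasurableSpace β] (μ : Measure β) [IsProbabilityMeasure μ]
    {v : β → ℝ} (hint : Integrable v μ) (h0 : ∀ x, 0 ≤ v x) (h1 : ∀ x, v x ≤ 1) :
    ∫ x, Real.sqrt (v x) ∂μ ≤ Real.sqrt (∫ x, v x ∂μ) := by
  have hsm : Integrable (fun x => Real.sqrt (v x)) μ := by
    refine (integrable_const (1:ℝ)).mono' (Real.continuous_sqrt.comp_aestronglyMeasurable hint.1) ?_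
    exact ae_of_all _ fun x => by
      rw [Real.norm_eq_abs, abs_of_nonneg (Real.sqrt_nonneg _)]
      exact Real.sqrt_le_one.mpr (h1 x)
  set I := ∫ x, Real.sqrt (v x) ∂μ with hI
  have hI0 : 0 ≤ I := integral_nonneg fun x => Real.sqrt_nonneg _
  have hexp : ∫ x, (Real.sqrt (v x) - I)^2 ∂μ = (∫ x, v x ∂μ) - I^2 := by
    have hptw : ∀ x, (Real.sqrt (v x) - I)^2 = v x - 2*I*Real.sqrt (v x) + I^2 := by
      intro x
      have : Real.sqrt (v x)^2 = v x := Real.sq_sqrt (h0 x)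
      nlinarith [this]
    have hint2 : Integrable (fun a => v a - 2*I*Real.sqrt (v a)) μ := hint.sub (hsm.const_mul (2*I))
    rw [integral_congr_ae (ae_of_all _ hptw),
      integral_add hint2 (integrable_const _),
      integral_sub hint (hsm.const_mul (2*I)), MeasureTheory.integral_const_mul, integral_const]
    simp only [Measure.real, measure_univ, ENNReal.toReal_one, smul_eq_mul, one_mul, ← hI]
    ring
  have hnn : 0 ≤ ∫ x, (Real.sqrt (v x) - I)^2 ∂μ := integral_nonneg fun x => sq_nonneg _
  have hle : I^2 ≤ ∫ x, v x ∂μ := by linarith [hexp ▸ hnn]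
  calc I = Real.sqrt (I^2) := by rw [Real.sqrt_sq hI0]
    _ ≤ Real.sqrt (∫ x, v x ∂μ) := Real.sqrt_le_sqrt hle


lemma frac_bound {α : Type*} [MeasurableSpace α] (ν Q : Measure α) [IsProbabilityMeasure ν]
    [IsProbabilityMeasure Q] (K : ℝ) (hK : 0 ≤ K)
    (hset : ∀ S : Set α, MeasurableSet S → (ν S).toReal ≤ (Q S).toReal + K * wfun ((Q S).toReal))
    {f : α → ℝ} (hfm : Measurable f) (hf0 : ∀ x, 0 ≤ f x) (hf1 : ∀ x, f x ≤ 1) :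
    ∫ x, f x ∂ν ≤ (∫ x, f x ∂Q) + K * wfun (∫ x, f x ∂Q) := by
  haveI hPM : IsProbabilityMeasure (volume.restrict (Ioc (0:ℝ) 1)) := by
    constructor
    rw [Measure.restrict_apply_univ, Real.volume_Ioc]
    simp
  -- layer cake for any probability measure
  have layer : ∀ (m : Measure α), IsProbabilityMeasure m →
      ∫ x, f x ∂m = ∫ s in Ioc (0:ℝ) 1, (m {a | s < f a}).toReal := by
    intro m hm
    have h1 : ∫ x, f x ∂m = (∫⁻ x, ENNReal.ofReal (f x) ∂m).toReal :=
      integral_eq_lintegral_of_nonneg_ae (ae_of_all _ hf0) hfm.aestronglyMeasurable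
    have h2 : ∫⁻ x, ENNReal.ofReal (f x) ∂m = ∫⁻ s in Ioi (0:ℝ), m {a | s < f a} :=
      lintegral_eq_lintegral_meas_lt m (ae_of_all _ hf0) hfm.aemeasurable
    have hsplit : (Ioc (0:ℝ) 1) ∪ (Ioi (1:ℝ)) = Ioi (0:ℝ) := Ioc_union_Ioi_eq_Ioi zero_le_one
    have hdisj : Disjoint (Ioc (0:ℝ) 1) (Ioi (1:ℝ)) := by
      rw [Set.disjoint_left]; intro s hs hs'
      exact absurd hs.2 (not_le.2 hs')
    have h3 : ∫⁻ s in Ioi (0:ℝ), m {a | s < f a}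
        = (∫⁻ s in Ioc (0:ℝ) 1, m {a | s < f a}) + ∫⁻ s in Ioi (1:ℝ), m {a | s < f a} := by
      rw [← lintegral_union measurableSet_Ioi hdisj, hsplit]
    have h4 : ∫⁻ s in Ioi (1:ℝ), m {a | s < f a} = 0 := by
      have : ∀ s ∈ Ioi (1:ℝ), m {a | s < f a} = 0 := by
        intro s hs
        have : {a | s < f a} = ∅ := by
          ext a; simp only [mem_setOf_eq, mem_empty_iff_false, iff_false, not_lt]
          exact (hf1 a).trans hs.le
        rw [this, measure_empty]
      calc ∫⁻ s in Ioi (1:ℝ), m {a | s < f a}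
          = ∫⁻ s in Ioi (1:ℝ), 0 := setLIntegral_congr_fun measurableSet_Ioi this
        _ = 0 := lintegral_zero
    have hanti : Antitone (fun s => m {a | s < f a}) := by
      intro s t hst
      exact measure_mono (fun a ha => lt_of_le_of_lt hst ha)
    have h5 : (∫⁻ s in Ioc (0:ℝ) 1, m {a | s < f a}).toReal
        = ∫ s in Ioc (0:ℝ) 1, (m {a | s < f a}).toReal := by
      rw [integral_toReal (hanti.measurable.aemeasurable) (ae_of_all _ fun s => measure_lt_top m _)]
    rw [h1, h2, h3, h4, add_zero, h5]
  have huqm : Measurable (fun s : ℝ => (Q {a | s < f a}).toReal) := by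
    have hanti : Antitone (fun s => (Q {a | s < f a}).toReal) := by
      intro s t hst
      exact ENNReal.toReal_mono (measure_ne_top _ _) (measure_mono (fun a ha => lt_of_le_of_lt hst ha))
    exact hanti.measurable
  have hutm : Measurable (fun s : ℝ => (ν {a | s < f a}).toReal) := by
    have hanti : Antitone (fun s => (ν {a | s < f a}).toReal) := by
      intro s t hst
      exact ENNReal.toReal_mono (measure_ne_top _ _) (measure_mono (fun a ha => lt_of_le_of_lt hst ha))
    exact hanti.measurable
  set uq : ℝ → ℝ := fun s => (Q {a | s < f a}).toReal with huq
  set ut : ℝ → ℝ := fun s => (ν {a | s < f a}).toReal with hut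
  have huq0 : ∀ s, 0 ≤ uq s := fun s => ENNReal.toReal_nonneg
  have huq1 : ∀ s, uq s ≤ 1 := fun s => by
    simpa using ENNReal.toReal_mono one_ne_top (prob_le_one (μ := Q) (s := {a | s < f a}))
  have hut1 : ∀ s, ut s ≤ 1 := fun s => by
    simpa using ENNReal.toReal_mono one_ne_top (prob_le_one (μ := ν) (s := {a | s < f a}))
  have hbd : ∀ (g : ℝ → ℝ), Measurable g → (∀ s, 0 ≤ g s) → (∀ s, g s ≤ 1) →
      Integrable g (volume.restrict (Ioc (0:ℝ) 1)) := by
    intro g hg h0 h1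
    refine (integrable_const (1:ℝ)).mono' hg.aestronglyMeasurable ?_
    exact ae_of_all _ fun s => by rw [Real.norm_eq_abs, abs_of_nonneg (h0 s)]; exact h1 s
  have huqint : Integrable uq (volume.restrict (Ioc (0:ℝ) 1)) := hbd uq huqm huq0 huq1
  have hutint : Integrable ut (volume.restrict (Ioc (0:ℝ) 1)) := hbd ut hutm (fun s => ENNReal.toReal_nonneg) hut1
  have hwcont : Continuous wfun := by
    unfold wfun
    exact (Real.continuous_sqrt).min (Real.continuous_sqrt.comp (continuous_const.sub continuous_id))
  have hwuqint : Integrable (fun s => wfun (uq s)) (volume.restrict (Ioc (0:ℝ) 1)) :=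
    hbd _ (hwcont.measurable.comp huqm) (fun s => wfun_nonneg _) (fun s => wfun_le_one (huq1 s))
  have hptw : ∀ s, ut s ≤ uq s + K * wfun (uq s) := by
    intro s
    exact hset _ (measurableSet_lt measurable_const hfm)
  set p : ℝ := ∫ s in Ioc (0:ℝ) 1, uq s with hp
  have hp0 : 0 ≤ p := integral_nonneg huq0
  have hp1 : p ≤ 1 := by
    have := integral_mono huqint (integrable_const 1) huq1
    simpa using this
  have step1 : ∫ s in Ioc (0:ℝ) 1, ut s ≤ p + K * ∫ s in Ioc (0:ℝ) 1, wfun (uq s) := by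
    have hsum : Integrable (fun s => uq s + K * wfun (uq s)) (volume.restrict (Ioc (0:ℝ) 1)) :=
      huqint.add (hwuqint.const_mul K)
    have hm := integral_mono hutint hsum hptw
    rwa [integral_add huqint (hwuqint.const_mul K), MeasureTheory.integral_const_mul] at hm
  have step2 : ∫ s in Ioc (0:ℝ) 1, wfun (uq s) ≤ wfun p := by
    have hs1int : Integrable (fun s => Real.sqrt (uq s)) (volume.restrict (Ioc (0:ℝ) 1)) :=
      hbd _ (Real.continuous_sqrt.measurable.comp huqm) (fun s => Real.sqrt_nonneg _)
        (fun s => Real.sqrt_le_one.mpr (huq1 s))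
    have hs2int : Integrable (fun s => Real.sqrt (1 - uq s)) (volume.restrict (Ioc (0:ℝ) 1)) :=
      hbd _ (Real.continuous_sqrt.measurable.comp (measurable_const.sub huqm)) (fun s => Real.sqrt_nonneg _)
        (fun s => Real.sqrt_le_one.mpr (by linarith [huq0 s]))
    have hj1 : ∫ s in Ioc (0:ℝ) 1, Real.sqrt (uq s) ≤ Real.sqrt p :=
      jensen_sqrt _ huqint huq0 huq1
    have hj2 : ∫ s in Ioc (0:ℝ) 1, Real.sqrt (1 - uq s) ≤ Real.sqrt (1 - p) := by
      have heq : ∫ s in Ioc (0:ℝ) 1, (1 - uq s) = 1 - p := by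
        rw [integral_sub (integrable_const 1) huqint]
        simp [hp]
      have hv2 : Integrable (fun s => 1 - uq s) (volume.restrict (Ioc (0:ℝ) 1)) :=
        (integrable_const 1).sub huqint
      have := jensen_sqrt (volume.restrict (Ioc (0:ℝ) 1)) hv2
        (fun s => by linarith [huq1 s]) (fun s => by linarith [huq0 s])
      rw [heq] at this
      exact this
    refine le_trans (le_min ?_ ?_) (min_le_min hj1 hj2)
    · exact integral_mono hwuqint hs1int (fun s => min_le_left _ _)
    · exact integral_mono hwuqint hs2int (fun s => min_le_right _ _)
  have hKw : K * ∫ s in Ioc (0:ℝ) 1, wfun (uq s) ≤ K * wfun p := mul_le_mul_of_nonneg_left step2 hK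
  rw [layer ν inferInstance, layer Q inferInstance]
  calc ∫ s in Ioc (0:ℝ) 1, ut s ≤ p + K * ∫ s in Ioc (0:ℝ) 1, wfun (uq s) := step1
    _ ≤ p + K * wfun p := by linarith


set_option maxHeartbeats 1000000 in
/-- Lovász–Simonovits mixing bound: for a lazy Markov chain `P` reversible with respect
to its stationary distribution `Q`, with conductance `φ`, starting distribution `Q₀`
with `M`-warmness `M(Q₀,Q) ≤ M`, the distribution `Q_t` after `t` steps satisfies
`d_tv(Q_t, Q) ≤ M · (1 - φ²/2)^t`. -/
theorem lovasz_simonovits_mixing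
    {α : Type*} [MeasurableSpace α]
    (P : α → Measure α) (hPmeas : Measurable P)
    (hPprob : ∀ x, IsProbabilityMeasure (P x))
    (hlazy : ∀ x, (1 : ℝ≥0∞) / 2 ≤ P x {x})
    (Q : Measure α) [IsProbabilityMeasure Q]
    (hrev : ∀ A B : Set α, MeasurableSet A → MeasurableSet B →
      ∫ x in A, (P x B).toReal ∂Q = ∫ x in B, (P x A).toReal ∂Q)
    (hstat : ∀ B : Set α, MeasurableSet B → Q.bind P B = Q B)
    (φ : ℝ)
    (hφ : φ = sInf {r : ℝ | ∃ S : Set α, MeasurableSet S ∧ 0 < Q S ∧ Q S < 1 ∧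
      r = (∫ x in S, (P x Sᶜ).toReal ∂Q) / min (Q S).toReal (Q Sᶜ).toReal})
    (Q₀ : Measure α) [IsProbabilityMeasure Q₀]
    (M : ℝ) (hM : ∀ S : Set α, MeasurableSet S → (Q₀ S).toReal ≤ M * (Q S).toReal)
    (Qt : ℕ → Measure α)
    (hQt0 : Qt 0 = Q₀)
    (hQtsucc : ∀ t, Qt (t + 1) = (Qt t).bind P)
    (t : ℕ) (S : Set α) (hS : MeasurableSet S) :
    |(Qt t S).toReal - (Q S).toReal| ≤ M * (1 - φ ^ 2 / 2) ^ t := by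
  -- basic instances and facts
  have hprob : ∀ t, IsProbabilityMeasure (Qt t) := by
    intro t
    induction t with
    | zero => rw [hQt0]; infer_instance
    | succ t ih =>
      rw [hQtsucc]
      constructor
      rw [Measure.bind_apply MeasurableSet.univ hPmeas.aemeasurable]
      have : ∀ x, P x Set.univ = 1 := fun x => (hPprob x).measure_univ
      simp only [this, lintegral_one]
      exact ih.measure_univ
  have hM1 : (1:ℝ) ≤ M := by
    have := hM Set.univ MeasurableSet.univ
    simpa using this
  have hM0 : (0:ℝ) ≤ M := by linarith
  have hPS : ∀ S : Set α, MeasurableSet S → Measurable (fun x => P x S) :=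
    fun S hS => (Measure.measurable_coe hS).comp hPmeas
  have hPfin : ∀ x (T : Set α), P x T ≠ ∞ := fun x T => measure_ne_top _ _
  have hPle1 : ∀ x (T : Set α), (P x T).toReal ≤ 1 := by
    intro x T
    haveI := hPprob x
    simpa using ENNReal.toReal_mono one_ne_top (prob_le_one (μ := P x) (s := T))
  have hhalfout : ∀ (T : Set α), MeasurableSet T → ∀ x, x ∉ T → P x T ≤ 1/2 := by
    intro T hT x hx
    have hdisj : Disjoint {x} T := Set.disjoint_singleton_left.mpr hx
    have hun : P x ({x} ∪ T) = P x {x} + P x T := measure_union hdisj hT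
    haveI := hPprob x
    have hle1 : P x {x} + P x T ≤ 1 := by rw [← hun]; exact prob_le_one
    have h2 : (1:ℝ≥0∞)/2 + P x T ≤ 1/2 + 1/2 := by
      calc (1:ℝ≥0∞)/2 + P x T ≤ P x {x} + P x T := add_le_add_left (hlazy x) _
        _ ≤ 1 := hle1
        _ = 1/2 + 1/2 := by rw [ENNReal.add_halves]
    exact (ENNReal.add_le_add_iff_left (by norm_num)).mp h2
  have hhalfin : ∀ (T : Set α), ∀ x ∈ T, (1:ℝ≥0∞)/2 ≤ P x T :=
    fun T x hx => le_trans (hlazy x) (measure_mono (Set.singleton_subset_iff.2 hx))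
  have hcompl : ∀ (m : Measure α), IsProbabilityMeasure m → ∀ (T : Set α), MeasurableSet T →
      (m Tᶜ).toReal = 1 - (m T).toReal := by
    intro m hm T hT
    haveI := hm
    rw [measure_compl hT (measure_ne_top m T), measure_univ]
    rw [ENNReal.toReal_sub_of_le prob_le_one one_ne_top]
    simp
  have hbdint : ∀ (m : Measure α), IsFiniteMeasure m → ∀ g : α → ℝ, Measurable g →
      (∀ x, |g x| ≤ 1) → Integrable g m := by
    intro m hm g hg hb
    haveI := hm
    exact (integrable_const 1).mono' hg.aestronglyMeasurable (ae_of_all _ hb)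
  -- conductance facts
  set cset : Set ℝ := {r : ℝ | ∃ S : Set α, MeasurableSet S ∧ 0 < Q S ∧ Q S < 1 ∧
      r = (∫ x in S, (P x Sᶜ).toReal ∂Q) / min (Q S).toReal (Q Sᶜ).toReal} with hcset
  have hcset_nonneg : ∀ r ∈ cset, (0:ℝ) ≤ r := by
    rintro r ⟨T, hT, h0, h1, rfl⟩
    apply div_nonneg
    · exact integral_nonneg fun x => ENNReal.toReal_nonneg
    · exact le_min ENNReal.toReal_nonneg ENNReal.toReal_nonneg
  have hbddB : BddBelow cset := ⟨0, fun r hr => hcset_nonneg r hr⟩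
  have hφ0 : 0 ≤ φ := by
    rcases Set.eq_empty_or_nonempty cset with h | h
    · rw [hφ, h, Real.sInf_empty]
    · rw [hφ]
      exact le_csInf h hcset_nonneg
  -- flow bounds
  have hflowhalf : ∀ (T : Set α), MeasurableSet T →
      ∫ x in T, (P x Tᶜ).toReal ∂Q ≤ (1/2) * (Q T).toReal := by
    intro T hT
    have hmono : ∀ x ∈ T, (P x Tᶜ).toReal ≤ 1/2 := by
      intro x hx
      have := hhalfout Tᶜ hT.compl x (by simpa using hx)
      have h2 : ((1:ℝ≥0∞)/2).toReal = 1/2 := by simp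
      calc (P x Tᶜ).toReal ≤ ((1:ℝ≥0∞)/2).toReal := ENNReal.toReal_mono (by norm_num) this
        _ = 1/2 := h2
    have hint1 : IntegrableOn (fun x => (P x Tᶜ).toReal) T Q := by
      apply hbdint (Q.restrict T) inferInstance _ ((hPS Tᶜ hT.compl).ennreal_toReal)
      intro x
      rw [abs_of_nonneg ENNReal.toReal_nonneg]
      exact hPle1 x Tᶜ
    calc ∫ x in T, (P x Tᶜ).toReal ∂Q ≤ ∫ _x in T, (1/2 : ℝ) ∂Q :=
          setIntegral_mono_on hint1 (integrableOn_const (measure_ne_top Q T)) hT hmono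
      _ = (Q T).toReal * (1/2) := by rw [setIntegral_const]; simp [smul_eq_mul, Measure.real]
      _ = (1/2) * (Q T).toReal := by ring
  have hφh : φ ≤ 1/2 := by
    rcases Set.eq_empty_or_nonempty cset with h | h
    · rw [hφ, h, Real.sInf_empty]; norm_num
    · obtain ⟨r, hr⟩ := h
      have hle : φ ≤ r := by rw [hφ]; exact csInf_le hbddB hr
      obtain ⟨T, hT, h0, h1, hrq⟩ := hr
      have hQT1 : (Q T).toReal > 0 := ENNReal.toReal_pos h0.ne' (measure_ne_top _ _)
      have hQTc : (Q Tᶜ).toReal > 0 := by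
        rw [hcompl Q inferInstance T hT]
        have : (Q T).toReal < 1 := by
          have := ENNReal.toReal_mono one_ne_top h1.le
          rcases eq_or_lt_of_le this with he | hl
          · exfalso
            have : Q T = 1 := by
              
              have hfin := measure_ne_top Q T
              apply (ENNReal.toReal_eq_toReal_iff' hfin one_ne_top).mp
              simpa using he
            exact absurd this h1.ne
          · simpa using hl
        linarith
      have hminpos : 0 < min (Q T).toReal (Q Tᶜ).toReal := lt_min hQT1 hQTc
      have hnum1 : ∫ x in T, (P x Tᶜ).toReal ∂Q ≤ (1/2) * (Q T).toReal := hflowhalf T hT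
      have hnum2 : ∫ x in T, (P x Tᶜ).toReal ∂Q ≤ (1/2) * (Q Tᶜ).toReal := by
        rw [hrev T Tᶜ hT hT.compl]
        have := hflowhalf Tᶜ hT.compl
        rwa [compl_compl] at this
      have hrle : r ≤ 1/2 := by
        rw [hrq, div_le_iff₀ hminpos]
        rcases min_choice (Q T).toReal (Q Tᶜ).toReal with hmin | hmin <;> rw [hmin]
        · linarith
        · linarith
      linarith
  have hflow : ∀ (T : Set α), MeasurableSet T →
      2*φ*min (Q T).toReal (1 - (Q T).toReal) ≤ 2 * ∫ x in T, (P x Tᶜ).toReal ∂Q := by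
    intro T hT
    have hnum0 : 0 ≤ ∫ x in T, (P x Tᶜ).toReal ∂Q := integral_nonneg fun x => ENNReal.toReal_nonneg
    rcases eq_or_lt_of_le (zero_le : (0:ℝ≥0∞) ≤ Q T) with h0 | h0
    · have hz : (Q T).toReal = 0 := by rw [← h0]; simp
      rw [hz]
      have h' : (2:ℝ)*φ*min 0 (1-0) = 0 := by norm_num
      rw [h']
      linarith
    · rcases eq_or_lt_of_le (prob_le_one (μ := Q) (s := T)) with h1 | h1
      · have hz : (Q T).toReal = 1 := by rw [h1]; simp
        rw [hz]
        have h' : (2:ℝ)*φ*min 1 (1-1) = 0 := by norm_num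
        rw [h']
        linarith
      · have hmem : (∫ x in T, (P x Tᶜ).toReal ∂Q) / min (Q T).toReal (Q Tᶜ).toReal ∈ cset :=
          ⟨T, hT, h0, h1, rfl⟩
        have hle : φ ≤ (∫ x in T, (P x Tᶜ).toReal ∂Q) / min (Q T).toReal (Q Tᶜ).toReal := by
          rw [hφ]; exact csInf_le hbddB hmem
        have hQT1 : (Q T).toReal > 0 := ENNReal.toReal_pos h0.ne' (measure_ne_top _ _)
        have hQTc : (Q Tᶜ).toReal = 1 - (Q T).toReal := hcompl Q inferInstance T hT
        have hQTcpos : 0 < (Q Tᶜ).toReal := by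
          rw [hQTc]
          have : (Q T).toReal < 1 := by
            have hfin := measure_ne_top Q T
            have h2 := ENNReal.toReal_mono one_ne_top h1.le
            rcases eq_or_lt_of_le h2 with he | hl
            · exfalso
              have : Q T = 1 := by
                apply (ENNReal.toReal_eq_toReal_iff' hfin one_ne_top).mp
                simpa using he
              exact absurd this h1.ne
            · simpa using hl
          linarith
        have hminpos : 0 < min (Q T).toReal (Q Tᶜ).toReal := lt_min hQT1 hQTcpos
        have := (le_div_iff₀ hminpos).mp hle
        rw [hQTc] at this
        linarith
  -- probability toReal bound
  have hle1m : ∀ (m : Measure α), IsProbabilityMeasure m → ∀ T : Set α, (m T).toReal ≤ 1 := by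
    intro m hm T
    haveI := hm
    simpa using ENNReal.toReal_mono one_ne_top (prob_le_one (μ := m) (s := T))
  -- stationarity in real form
  have hstatR : ∀ T : Set α, MeasurableSet T → ∫ x, (P x T).toReal ∂Q = (Q T).toReal := by
    intro T hT
    rw [integral_toReal ((hPS T hT).aemeasurable) (ae_of_all _ fun x => measure_lt_top (P x) T)]
    congr 1
    rw [← hstat T hT, Measure.bind_apply hT hPmeas.aemeasurable]
  have habs : ∀ (g : α → ℝ), (∀ x, 0 ≤ g x) → (∀ x, g x ≤ 1) → ∀ x, |g x| ≤ 1 :=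
    fun g h0 h1 x => abs_le.mpr ⟨by linarith [h0 x], h1 x⟩
  have hcnn : (0:ℝ) ≤ 1 - φ^2/2 := by nlinarith
  -- main induction
  have key : ∀ n, ∀ T : Set α, MeasurableSet T →
      (Qt n T).toReal ≤ (Q T).toReal + (1 - φ^2/2)^n * M * wfun ((Q T).toReal) := by
    intro n
    induction n with
    | zero =>
      intro T hT
      rw [hQt0, pow_zero, one_mul]
      have hq1 : (Q₀ T).toReal ≤ 1 := hle1m Q₀ inferInstance T
      have hq0 : 0 ≤ (Q₀ T).toReal := ENNReal.toReal_nonneg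
      have hp0 : 0 ≤ (Q T).toReal := ENNReal.toReal_nonneg
      have hp1 : (Q T).toReal ≤ 1 := hle1m Q inferInstance T
      have hqM := hM T hT
      rcases le_total ((Q T).toReal) (1/2) with hp | hp
      · have hw : wfun ((Q T).toReal) = Real.sqrt ((Q T).toReal) :=
          min_eq_left (Real.sqrt_le_sqrt (by linarith))
        have hps : (Q T).toReal ≤ Real.sqrt ((Q T).toReal) := by
          nlinarith [Real.sq_sqrt hp0, Real.sqrt_nonneg ((Q T).toReal)]
        rw [hw]
        nlinarith [Real.sqrt_nonneg ((Q T).toReal)]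
      · have hw : wfun ((Q T).toReal) = Real.sqrt (1 - (Q T).toReal) :=
          min_eq_right (Real.sqrt_le_sqrt (by linarith))
        have hps : 1 - (Q T).toReal ≤ Real.sqrt (1 - (Q T).toReal) := by
          nlinarith [Real.sq_sqrt (show (0:ℝ) ≤ 1 - (Q T).toReal by linarith),
            Real.sqrt_nonneg (1 - (Q T).toReal)]
        rw [hw]
        nlinarith [Real.sqrt_nonneg (1 - (Q T).toReal)]
    | succ n ih =>
      intro T hT
      haveI := hprob n
      haveI := hprob (n+1)
      have hp0 : 0 ≤ (Q T).toReal := ENNReal.toReal_nonneg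
      have hp1 : (Q T).toReal ≤ 1 := hle1m Q inferInstance T
      have hrm : Measurable (fun x => (P x T).toReal) := (hPS T hT).ennreal_toReal
      have hr0 : ∀ x, 0 ≤ (P x T).toReal := fun x => ENNReal.toReal_nonneg
      have hr1 : ∀ x, (P x T).toReal ≤ 1 := fun x => hPle1 x T
      have hrin : ∀ x ∈ T, 1/2 ≤ (P x T).toReal := by
        intro x hx
        have h := ENNReal.toReal_mono (hPfin x T) (hhalfin T x hx)
        simpa using h
      have hrout : ∀ x, x ∉ T → (P x T).toReal ≤ 1/2 := by
        intro x hx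
        have h := ENNReal.toReal_mono (by norm_num : (1/2:ℝ≥0∞) ≠ ⊤) (hhalfout T hT x hx)
        simpa using h
      have hf₁m : Measurable (fun x => max (2 * (P x T).toReal - 1) 0) :=
        ((hrm.const_mul 2).sub measurable_const).max measurable_const
      have hf₂m : Measurable (fun x => min (2 * (P x T).toReal) 1) :=
        (hrm.const_mul 2).min measurable_const
      have hf₁0 : ∀ x, 0 ≤ max (2 * (P x T).toReal - 1) 0 := fun x => le_max_right _ _
      have hf₁1 : ∀ x, max (2 * (P x T).toReal - 1) 0 ≤ 1 :=
        fun x => max_le (by linarith [hr1 x]) zero_le_one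
      have hf₂0 : ∀ x, 0 ≤ min (2 * (P x T).toReal) 1 :=
        fun x => le_min (by linarith [hr0 x]) zero_le_one
      have hf₂1 : ∀ x, min (2 * (P x T).toReal) 1 ≤ 1 := fun x => min_le_right _ _
      have hsplit : ∀ x, max (2 * (P x T).toReal - 1) 0 + min (2 * (P x T).toReal) 1
          = 2 * (P x T).toReal := by
        intro x
        rcases le_total (2 * (P x T).toReal) 1 with h | h
        · rw [max_eq_right (by linarith), min_eq_left h]; ring
        · rw [max_eq_left (by linarith), min_eq_right h]; ring
      have hrintQt : Integrable (fun x => (P x T).toReal) (Qt n) :=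
        hbdint _ inferInstance _ hrm (habs _ hr0 hr1)
      have hf₁intQt : Integrable (fun x => max (2 * (P x T).toReal - 1) 0) (Qt n) :=
        hbdint _ inferInstance _ hf₁m (habs _ hf₁0 hf₁1)
      have hf₂intQt : Integrable (fun x => min (2 * (P x T).toReal) 1) (Qt n) :=
        hbdint _ inferInstance _ hf₂m (habs _ hf₂0 hf₂1)
      have hf₁intQ : Integrable (fun x => max (2 * (P x T).toReal - 1) 0) Q :=
        hbdint _ inferInstance _ hf₁m (habs _ hf₁0 hf₁1)
      have hf₂intQ : Integrable (fun x => min (2 * (P x T).toReal) 1) Q :=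
        hbdint _ inferInstance _ hf₂m (habs _ hf₂0 hf₂1)
      -- value of Qt (n+1) on T
      have hQt1 : (Qt (n+1) T).toReal = ∫ x, (P x T).toReal ∂(Qt n) := by
        rw [integral_toReal ((hPS T hT).aemeasurable)
          (ae_of_all _ fun x => measure_lt_top (P x) T), hQtsucc n,
          Measure.bind_apply hT hPmeas.aemeasurable]
      -- flow quantity
      set Φ : ℝ := ∫ x in T, (P x Tᶜ).toReal ∂Q with hΦdef
      have hPcompl : ∀ x, (P x Tᶜ).toReal = 1 - (P x T).toReal :=
        fun x => hcompl (P x) (hPprob x) T hT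
      have hrestint1 : IntegrableOn (fun x => (P x Tᶜ).toReal) T Q := by
        apply hbdint (Q.restrict T) inferInstance _ ((hPS Tᶜ hT.compl).ennreal_toReal)
        intro x
        rw [abs_of_nonneg ENNReal.toReal_nonneg]
        exact hPle1 x Tᶜ
      have hrestint2 : IntegrableOn (fun x => (P x T).toReal) T Q := by
        apply hbdint (Q.restrict T) inferInstance _ hrm
        exact habs _ hr0 hr1
      have hsetr : ∫ x in T, (P x T).toReal ∂Q = (Q T).toReal - Φ := by
        have hpt : ∀ x, (P x T).toReal = 1 - (P x Tᶜ).toReal := by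
          intro x; rw [hPcompl x]; ring
        calc ∫ x in T, (P x T).toReal ∂Q = ∫ x in T, (1 - (P x Tᶜ).toReal) ∂Q := by
              exact setIntegral_congr_fun hT (fun x _ => hpt x)
          _ = ∫ _x in T, (1:ℝ) ∂Q - ∫ x in T, (P x Tᶜ).toReal ∂Q := by
              exact integral_sub (integrableOn_const (measure_ne_top Q T)) hrestint1
          _ = (Q T).toReal - Φ := by rw [setIntegral_const]; simp [smul_eq_mul, Measure.real, hΦdef]
      have hf₁eq : (fun x => max (2 * (P x T).toReal - 1) 0)
          = T.indicator (fun x => 2 * (P x T).toReal - 1) := by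
        funext x
        by_cases hx : x ∈ T
        · rw [Set.indicator_of_mem hx]
          exact max_eq_left (by linarith [hrin x hx])
        · rw [Set.indicator_of_notMem hx]
          exact max_eq_right (by linarith [hrout x hx])
      have hf₁Q : ∫ x, max (2 * (P x T).toReal - 1) 0 ∂Q = (Q T).toReal - 2 * Φ := by
        rw [hf₁eq, integral_indicator hT]
        have h2r : IntegrableOn (fun x => 2 * (P x T).toReal) T Q := hrestint2.const_mul 2
        calc ∫ x in T, (2 * (P x T).toReal - 1) ∂Q
            = ∫ x in T, 2 * (P x T).toReal ∂Q - ∫ _x in T, (1:ℝ) ∂Q :=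
              integral_sub h2r (integrableOn_const (measure_ne_top Q T))
          _ = 2 * ∫ x in T, (P x T).toReal ∂Q - (Q T).toReal := by
              rw [MeasureTheory.integral_const_mul, setIntegral_const]; simp [smul_eq_mul, Measure.real]
          _ = (Q T).toReal - 2 * Φ := by rw [hsetr]; ring
      have hsum2 : ∫ x, max (2 * (P x T).toReal - 1) 0 ∂Q
          + ∫ x, min (2 * (P x T).toReal) 1 ∂Q = 2 * (Q T).toReal := by
        rw [← integral_add hf₁intQ hf₂intQ]
        have : (fun x => max (2 * (P x T).toReal - 1) 0 + min (2 * (P x T).toReal) 1)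
            = fun x => 2 * (P x T).toReal := funext hsplit
        rw [this, MeasureTheory.integral_const_mul, hstatR T hT]
      have hf₂Q : ∫ x, min (2 * (P x T).toReal) 1 ∂Q = (Q T).toReal + 2 * Φ := by
        have := hsum2
        rw [hf₁Q] at this
        linarith
      -- bounds on endpoints
      have ha0 : 0 ≤ (Q T).toReal - 2 * Φ := by
        rw [← hf₁Q]
        exact integral_nonneg hf₁0
      have hb1 : (Q T).toReal + 2 * Φ ≤ 1 := by
        rw [← hf₂Q]
        have := integral_mono hf₂intQ (integrable_const 1) hf₂1
        simpa using this
      -- conductance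
      have hd := hflow T hT
      -- spread + step
      have hm0 : 0 ≤ min ((Q T).toReal) (1 - (Q T).toReal) := le_min hp0 (by linarith)
      have h2φm : 0 ≤ 2*φ*min ((Q T).toReal) (1 - (Q T).toReal) := by positivity
      have hspread : wfun ((Q T).toReal - 2*Φ) + wfun ((Q T).toReal + 2*Φ)
          ≤ (2 - φ^2) * wfun ((Q T).toReal) := by
        have h1 := wfun_spread (a := (Q T).toReal - 2*Φ) (b := (Q T).toReal + 2*Φ)
          (a' := (Q T).toReal - 2*φ*min ((Q T).toReal) (1 - (Q T).toReal))
          (b' := (Q T).toReal + 2*φ*min ((Q T).toReal) (1 - (Q T).toReal))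
          ha0 hb1 (by linarith) (by linarith) (by linarith) (by ring)
        have h2 := wfun_step hp0 hp1 hφ0 hφh
        linarith
      -- frac_bound applications
      have hKnn : 0 ≤ (1 - φ^2/2)^n * M := mul_nonneg (pow_nonneg hcnn n) hM0
      have hbb1 := frac_bound (Qt n) Q _ hKnn ih hf₁m hf₁0 hf₁1
      have hbb2 := frac_bound (Qt n) Q _ hKnn ih hf₂m hf₂0 hf₂1
      rw [hf₁Q] at hbb1
      rw [hf₂Q] at hbb2
      -- combine
      have hintsplit : ∫ x, max (2 * (P x T).toReal - 1) 0 ∂(Qt n)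
          + ∫ x, min (2 * (P x T).toReal) 1 ∂(Qt n) = 2 * ∫ x, (P x T).toReal ∂(Qt n) := by
        rw [← integral_add hf₁intQt hf₂intQt]
        have : (fun x => max (2 * (P x T).toReal - 1) 0 + min (2 * (P x T).toReal) 1)
            = fun x => 2 * (P x T).toReal := funext hsplit
        rw [this, MeasureTheory.integral_const_mul]
      have hwa := wfun_nonneg ((Q T).toReal - 2*Φ)
      have hwb := wfun_nonneg ((Q T).toReal + 2*Φ)
      have hmul : (1 - φ^2/2)^n * M * (wfun ((Q T).toReal - 2*Φ) + wfun ((Q T).toReal + 2*Φ))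
          ≤ (1 - φ^2/2)^n * M * ((2 - φ^2) * wfun ((Q T).toReal)) :=
        mul_le_mul_of_nonneg_left hspread hKnn
      have hpow : (1 - φ^2/2)^(n+1) = (1 - φ^2/2)^n * (1 - φ^2/2) := pow_succ _ _
      rw [hQt1, hpow]
      nlinarith [hbb1, hbb2, hintsplit, hmul]
  -- final assembly
  haveI := hprob t
  have h1 := key t S hS
  have h2 := key t Sᶜ hS.compl
  rw [hcompl Q inferInstance S hS, hcompl (Qt t) (hprob t) S hS] at h2
  have hp0 : 0 ≤ (Q S).toReal := ENNReal.toReal_nonneg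
  have hp1 : (Q S).toReal ≤ 1 := hle1m Q inferInstance S
  have hKnn : 0 ≤ (1 - φ^2/2)^t * M := mul_nonneg (pow_nonneg hcnn t) hM0
  have hw1 : wfun ((Q S).toReal) ≤ 1 := wfun_le_one hp1
  have hw2 : wfun (1 - (Q S).toReal) ≤ 1 := wfun_le_one (by linarith)
  have hmm1 : (1 - φ^2/2)^t * M * wfun ((Q S).toReal) ≤ (1 - φ^2/2)^t * M := by
    have := mul_le_mul_of_nonneg_left hw1 hKnn
    linarith
  have hmm2 : (1 - φ^2/2)^t * M * wfun (1 - (Q S).toReal) ≤ (1 - φ^2/2)^t * M := by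
    have := mul_le_mul_of_nonneg_left hw2 hKnn
    linarith
  have hcomm : M * (1 - φ^2/2)^t = (1 - φ^2/2)^t * M := mul_comm _ _
  rw [abs_le, hcomm]
  constructor
  · linarith
  · linarith
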